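/- If a graph G is n-edge bottlenecked, then the graph G' obtained from G by subdividing every edge exactly once is n-point bottlenecked. -/

import Mathlib

open SimpleGraph

variable {V : Type}

/-- A set of vertices is connected if the induced subgraph is connected. -/
def ConnSet (G : SimpleGraph V) (X : Set V) : Prop := (G.induce X).Connected

/-- `G` is `n`-edge bottlenecked: any two disjoint connected vertex sets `X,Y`
admit a set of at most `n` edges meeting every `X,Y` path. -/
def EdgeBottlenecked (G : SimpleGraph V) (n : ℕ) : Prop :=
  ∀ X Y : Set V, Disjoint X Y → ConnSet G X → ConnSet G Y →
    ∃ S : Finset (Sym2 V), S.card ≤ n ∧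
      ∀ ⦃x y : V⦄ (p : G.Walk x y), x ∈ X → y ∈ Y → p.IsPath → ∃ e ∈ S, e ∈ p.edges

/-- `G` is `n`-point bottlenecked: any two disjoint connected vertex sets `X,Y`
admit a set of at most `n` vertices meeting every `X,Y` path. -/
def PointBottlenecked (G : SimpleGraph V) (n : ℕ) : Prop :=
  ∀ X Y : Set V, Disjoint X Y → ConnSet G X → ConnSet G Y →
    ∃ S : Finset V, S.card ≤ n ∧
      ∀ ⦃x y : V⦄ (p : G.Walk x y), x ∈ X → y ∈ Y → p.IsPath → ∃ v ∈ S, v ∈ p.support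

/-- An `n`-ladder: two disjoint connected poles `X,Y` and `n` rungs, i.e. `X,Y`
paths that are pairwise disjoint outside of `X ∪ Y`. -/
structure Ladder (G : SimpleGraph V) (n : ℕ) where
  X : Set V
  Y : Set V
  disj : Disjoint X Y
  connX : ConnSet G X
  connY : ConnSet G Y
  a : Fin n → V
  b : Fin n → V
  ha : ∀ i, a i ∈ X
  hb : ∀ i, b i ∈ Y
  p : (i : Fin n) → G.Walk (a i) (b i)
  isPath : ∀ i, (p i).IsPath
  rungsDisj : ∀ i j, i ≠ j → ∀ v, v ∈ (p i).support → v ∈ (p j).support → v ∈ X ∪ Y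

/-- `G` contains the dipole `D_k` as a minor: equivalently, `G` contains a `k`-ladder. -/
def HasDipoleMinor (G : SimpleGraph V) (k : ℕ) : Prop := Nonempty (Ladder G k)

/-- Two vertex sets are `M`-disjoint if every pair of points (one from each) is at
graph distance at least `M`. -/
def MDisjoint (G : SimpleGraph V) (M : ℕ) (X Y : Set V) : Prop :=
  ∀ x ∈ X, ∀ y ∈ Y, M ≤ G.dist x y

/-- `G` is `M`-fat `n`-bottlenecked: any two connected `M`-disjoint sets `X,Y` admit
at most `n` vertices (outside `X ∪ Y`) whose open `M`-neighborhood meets every `X,Y` path. -/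
def FatBottlenecked (G : SimpleGraph V) (M n : ℕ) : Prop :=
  ∀ X Y : Set V, ConnSet G X → ConnSet G Y → MDisjoint G M X Y →
    ∃ S : Finset V, S.card ≤ n ∧ (∀ s ∈ S, s ∉ X ∪ Y) ∧
      ∀ ⦃x y : V⦄ (p : G.Walk x y), x ∈ X → y ∈ Y → p.IsPath →
        ∃ v ∈ p.support, ∃ s ∈ S, G.dist v s < M

/-- An `M`-fat `n`-ladder: an `n`-ladder whose poles are `M`-disjoint and whose
rungs are pairwise `M`-disjoint. -/
structure FatLadder (G : SimpleGraph V) (M n : ℕ) extends Ladder G n where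
  polesFat : MDisjoint G M X Y
  rungsFat : ∀ i j, i ≠ j → ∀ u v, u ∈ (p i).support → v ∈ (p j).support → M ≤ G.dist u v

/-- `H` is a minor of `G`: branch sets in `G` (nonempty, connected, pairwise disjoint)
realize the vertices of `H`, and every edge of `H` is realized by an edge of `G`. -/
def IsMinor {W : Type} (G : SimpleGraph V) (H : SimpleGraph W) : Prop :=
  ∃ B : W → Set V, (∀ w, (B w).Nonempty) ∧ (∀ w, ConnSet G (B w)) ∧
    (∀ w w', w ≠ w' → Disjoint (B w) (B w')) ∧
    (∀ ⦃w w'⦄, H.Adj w w' → ∃ u ∈ B w, ∃ v ∈ B w', G.Adj u v)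

/-- `H` is an `M`-fat minor of `G`: a minor whose branch sets are pairwise `M`-disjoint
except where incident (adjacent) in `H`. -/
def IsFatMinor (G : SimpleGraph V) (M : ℕ) {W : Type} (H : SimpleGraph W) : Prop :=
  ∃ B : W → Set V, (∀ w, (B w).Nonempty) ∧ (∀ w, ConnSet G (B w)) ∧
    (∀ w w', w ≠ w' → Disjoint (B w) (B w')) ∧
    (∀ w w', w ≠ w' → ¬ H.Adj w w' → MDisjoint G M (B w) (B w')) ∧
    (∀ ⦃w w'⦄, H.Adj w w' → ∃ u ∈ B w, ∃ v ∈ B w', G.Adj u v)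

/-- The graph obtained from `G` by subdividing every edge exactly once: each edge is
replaced by a path of length two through a new vertex. -/
def Subdiv (G : SimpleGraph V) : SimpleGraph (V ⊕ G.edgeSet) where
  Adj a b :=
    match a, b with
    | Sum.inl v, Sum.inr e => v ∈ (e : Sym2 V)
    | Sum.inr e, Sum.inl v => v ∈ (e : Sym2 V)
    | _, _ => False
  symm := ⟨by
    rintro (v | e) (w | f) h <;> simp_all⟩
  loopless := ⟨by
    rintro (v | e) h <;> simp_all⟩

lemma walk_of_mem_edge {G : SimpleGraph V} (e : G.edgeSet) {u v : V}
    (hu : u ∈ (e : Sym2 V)) (hv : v ∈ (e : Sym2 V)) :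
    ∃ q : G.Walk u v, (∀ s ∈ q.edges, s = (e : Sym2 V)) ∧ (∀ x ∈ q.support, x = u ∨ x = v) := by
  by_cases h : u = v
  · subst h; exact ⟨.nil, by simp, by simp⟩
  · have he : (e : Sym2 V) = s(u, v) := (Sym2.mem_and_mem_iff h).mp ⟨hu, hv⟩
    have hadj : G.Adj u v := by
      have := e.2
      rwa [he, SimpleGraph.mem_edgeSet] at this
    exact ⟨.cons hadj .nil, by simp [he], by simp⟩

lemma proj_walk {G : SimpleGraph V} {a b : V ⊕ G.edgeSet} (p : (Subdiv G).Walk a b) :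
    ∀ {u w : V},
    (a = Sum.inl u ∨ ∃ e : G.edgeSet, a = Sum.inr e ∧ u ∈ (e : Sym2 V)) →
    (b = Sum.inl w ∨ ∃ e : G.edgeSet, b = Sum.inr e ∧ w ∈ (e : Sym2 V)) →
    ∃ q : G.Walk u w,
      (∀ v ∈ q.support, Sum.inl v ∈ p.support ∨ v = u ∨ v = w) ∧
      (∀ s ∈ q.edges, ∃ hs : s ∈ G.edgeSet,
        Sum.inr (⟨s, hs⟩ : G.edgeSet) ∈ p.support) := by
  induction p with
  | nil =>
    intro u w hu hw
    rcases hu with rfl | ⟨e, rfl, hue⟩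
    · rcases hw with h | ⟨f, h, _⟩
      · obtain rfl : u = w := by injection h
        exact ⟨.nil, by simp, by simp⟩
      · exact absurd h (by simp)
    · rcases hw with h | ⟨f, h, hwf⟩
      · exact absurd h (by simp)
      · obtain rfl : e = f := by injection h
        obtain ⟨q, hq1, hq2⟩ := walk_of_mem_edge e hue hwf
        refine ⟨q, fun v hv => Or.inr (hq2 v hv), fun s hs => ?_⟩
        rw [hq1 s hs]
        exact ⟨e.2, by simp⟩
  | cons h p ih =>
    rename_i a c b
    intro u w hu hw
    rcases hu with rfl | ⟨e, rfl, hue⟩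
    · -- a = inl u, c must be inr e
      obtain (v | e) := c
      · exact (h : False).elim
      · have hue : u ∈ (e : Sym2 V) := h
        obtain ⟨q, hq1, hq2⟩ := ih (Or.inr ⟨e, rfl, hue⟩) hw
        refine ⟨q, fun v hv => ?_, fun s hs => ?_⟩
        · rcases hq1 v hv with h' | h'
          · exact Or.inl (by simp [h'])
          · exact Or.inr h'
        · obtain ⟨hs', hmem⟩ := hq2 s hs
          exact ⟨hs', by simp [hmem]⟩
    · -- a = inr e, c must be inl v
      obtain (v | f) := c
      swap
      · exact (h : False).elim
      · have hve : v ∈ (e : Sym2 V) := h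
        obtain ⟨q₁, hq1, hq2⟩ := ih (Or.inl rfl) hw
        obtain ⟨q₀, h01, h02⟩ := walk_of_mem_edge e hue hve
        refine ⟨q₀.append q₁, fun x hx => ?_, fun s hs => ?_⟩
        · rw [SimpleGraph.Walk.mem_support_append_iff] at hx
          rcases hx with hx | hx
          · rcases h02 x hx with rfl | rfl
            · exact Or.inr (Or.inl rfl)
            · exact Or.inl (by simp)
          · rcases hq1 x hx with h' | h' | h'
            · exact Or.inl (by simp [h'])
            · exact Or.inl (by simp [h'])
            · exact Or.inr (Or.inr h')
        · rw [SimpleGraph.Walk.edges_append, List.mem_append] at hs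
          rcases hs with hs | hs
          · refine ⟨(h01 s hs) ▸ e.2, ?_⟩
            have : (⟨s, (h01 s hs) ▸ e.2⟩ : G.edgeSet) = e := Subtype.ext (h01 s hs)
            rw [this]; simp
          · obtain ⟨hs', hmem⟩ := hq2 s hs
            exact ⟨hs', by simp [hmem]⟩

lemma reachable_induce_of_walk {G : SimpleGraph V} {s : Set V} :
    ∀ {u w : V} (q : G.Walk u w) (_ : ∀ v ∈ q.support, v ∈ s) (hu : u ∈ s) (hw : w ∈ s),
      (G.induce s).Reachable ⟨u, hu⟩ ⟨w, hw⟩ := by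
  intro u w q
  induction q with
  | nil => intro _ hu hw; rfl
  | cons h q ih =>
    rename_i a c b
    intro hsup hu hw
    have hc : c ∈ s := hsup c (by simp)
    have hadj : (G.induce s).Adj ⟨a, hu⟩ ⟨c, hc⟩ := h
    exact (hadj.reachable).trans (ih (fun v hv => hsup v (by simp [hv])) hc hw)

lemma walk_in_set_of_induce_reachable {G : SimpleGraph V} {s : Set V} {a b : ↑s}
    (h : (G.induce s).Reachable a b) :
    ∃ p : G.Walk a.1 b.1, ∀ v ∈ p.support, v ∈ s := by
  obtain ⟨r⟩ := h
  refine ⟨r.map (SimpleGraph.Embedding.induce s).toHom, fun v hv => ?_⟩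
  have hv : v ∈ (r.map (SimpleGraph.Embedding.induce s).toHom).support := hv
  rw [SimpleGraph.Walk.support_map, List.mem_map] at hv
  obtain ⟨⟨z, hz⟩, _, rfl⟩ := hv
  exact hz

-- If X is connected in Subdiv G and contains an inl vertex, then the inl-trace is connected in G.

lemma connSet_inlTrace {G : SimpleGraph V} {X : Set (V ⊕ G.edgeSet)}
    (hX : (Subdiv G).induce X |>.Connected) {x₀ : V} (hx₀ : Sum.inl x₀ ∈ X) :
    ConnSet G {v : V | Sum.inl v ∈ X} := by
  rw [ConnSet, SimpleGraph.connected_iff]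
  refine ⟨?_, ⟨⟨x₀, hx₀⟩⟩⟩
  rintro ⟨u, hu⟩ ⟨w, hw⟩
  obtain ⟨p, hp⟩ := walk_in_set_of_induce_reachable
    (hX.preconnected ⟨Sum.inl u, hu⟩ ⟨Sum.inl w, hw⟩)
  obtain ⟨q, hq1, _⟩ := proj_walk p (Or.inl rfl) (Or.inl rfl)
  refine reachable_induce_of_walk q (fun v hv => ?_) hu hw
  rcases hq1 v hv with h | rfl | rfl
  · exact hp _ h
  · exact hu
  · exact hw

-- second vertex extraction: connected X containing inr e and some inl vertex

lemma exists_inl_endpoint {G : SimpleGraph V} {X : Set (V ⊕ G.edgeSet)}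
    (hX : (Subdiv G).induce X |>.Connected) {x₀ : V} (hx₀ : Sum.inl x₀ ∈ X)
    {e : G.edgeSet} (he : Sum.inr e ∈ X) :
    ∃ u : V, u ∈ (e : Sym2 V) ∧ Sum.inl u ∈ X := by
  obtain ⟨r⟩ := hX.preconnected ⟨Sum.inr e, he⟩ ⟨Sum.inl x₀, hx₀⟩
  cases r with
  | cons h r =>
    rename_i c
    obtain ⟨(v | f), hc⟩ := c
    · exact ⟨v, h, hc⟩
    · exact (h : False).elim

-- dichotomy

lemma subdiv_conn_dichotomy {G : SimpleGraph V} {X : Set (V ⊕ G.edgeSet)}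
    (hX : (Subdiv G).induce X |>.Connected) :
    (∃ v, Sum.inl v ∈ X) ∨ (∃ e : G.edgeSet, X = {Sum.inr e}) := by
  by_cases h : ∃ v, Sum.inl v ∈ X
  · exact Or.inl h
  · push_neg at h
    obtain ⟨⟨a, ha⟩⟩ := hX.nonempty
    obtain (v | e) := a
    · exact absurd ha (h v)
    · refine Or.inr ⟨e, Set.eq_singleton_iff_unique_mem.mpr ⟨ha, ?_⟩⟩
      rintro b hb
      obtain (v | f) := b
      · exact absurd hb (h v)
      · by_contra hne
        have hef : f ≠ e := fun hh => hne (by rw [hh])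
        obtain ⟨r⟩ := hX.preconnected ⟨Sum.inr f, hb⟩ ⟨Sum.inr e, ha⟩
        cases r with
        | nil => exact hne rfl
        | cons hadj r =>
          rename_i c
          obtain ⟨(v | g), hc⟩ := c
          · exact absurd hc (h v)
          · exact (hadj : False).elim

lemma connSet_singleton (G : SimpleGraph V) (u : V) : ConnSet G {u} := by
  rw [ConnSet, SimpleGraph.induce_singleton_eq_top]
  exact @SimpleGraph.connected_top _ ⟨⟨u, rfl⟩⟩

lemma one_le_of_edge {G : SimpleGraph V} {n : ℕ} (h : EdgeBottlenecked G n)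
    (e : G.edgeSet) : 1 ≤ n := by
  obtain ⟨s, hs⟩ := e
  induction s using Sym2.ind with
  | _ u w =>
    rw [SimpleGraph.mem_edgeSet] at hs
    have hne : u ≠ w := hs.ne
    obtain ⟨S, hcard, hsep⟩ := h {u} {w} (by simp [hne]) (connSet_singleton G u)
      (connSet_singleton G w)
    have hpath : (SimpleGraph.Walk.cons hs .nil).IsPath := by
      simp [SimpleGraph.Walk.isPath_def, hne]
    obtain ⟨s, hsS, -⟩ := hsep (SimpleGraph.Walk.cons hs .nil) rfl rfl hpath
    exact le_trans (Finset.card_pos.mpr ⟨s, hsS⟩) hcard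

/-- If `G` is `n`-edge bottlenecked, then the graph obtained by subdividing every edge
of `G` exactly once is `n`-point bottlenecked. -/
theorem subdiv_pointBottlenecked (G : SimpleGraph V) (n : ℕ)
    (h : EdgeBottlenecked G n) : PointBottlenecked (Subdiv G) n := by
  classical
  intro X Y hdisj hX hY
  rcases subdiv_conn_dichotomy hX with ⟨x₀, hx₀⟩ | ⟨e, rfl⟩
  · rcases subdiv_conn_dichotomy hY with ⟨y₀, hy₀⟩ | ⟨f, rfl⟩
    · -- main case
      set X' : Set V := {v | Sum.inl v ∈ X} with hX'def
      set Y' : Set V := {v | Sum.inl v ∈ Y} with hY'def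
      have hdisj' : Disjoint X' Y' := by
        rw [Set.disjoint_left]
        intro v hv hv'
        exact Set.disjoint_left.mp hdisj hv hv'
      obtain ⟨SE, hcard, hsep⟩ := h X' Y' hdisj' (connSet_inlTrace hX hx₀)
        (connSet_inlTrace hY hy₀)
      refine ⟨(SE.filter (· ∈ G.edgeSet)).attach.image
        (fun q => (Sum.inr ⟨q.1, (Finset.mem_filter.mp q.2).2⟩ : V ⊕ G.edgeSet)),
        ?_, ?_⟩
      · calc _ ≤ (SE.filter (· ∈ G.edgeSet)).attach.card := Finset.card_image_le
          _ = (SE.filter (· ∈ G.edgeSet)).card := Finset.card_attach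
          _ ≤ SE.card := Finset.card_filter_le _ _
          _ ≤ n := hcard
      · intro x y p hx hy hp
        -- get a u ∈ X' compatible with x
        have hxu : ∃ u, u ∈ X' ∧
            (x = Sum.inl u ∨ ∃ e : G.edgeSet, x = Sum.inr e ∧ u ∈ (e : Sym2 V)) := by
          obtain (v | e') := x
          · exact ⟨v, hx, Or.inl rfl⟩
          · obtain ⟨u, hue, huX⟩ := exists_inl_endpoint hX hx₀ hx
            exact ⟨u, huX, Or.inr ⟨e', rfl, hue⟩⟩
        have hyw : ∃ w, w ∈ Y' ∧
            (y = Sum.inl w ∨ ∃ e : G.edgeSet, y = Sum.inr e ∧ w ∈ (e : Sym2 V)) := by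
          obtain (v | f') := y
          · exact ⟨v, hy, Or.inl rfl⟩
          · obtain ⟨w, hwf, hwY⟩ := exists_inl_endpoint hY hy₀ hy
            exact ⟨w, hwY, Or.inr ⟨f', rfl, hwf⟩⟩
        obtain ⟨u, huX', hxu⟩ := hxu
        obtain ⟨w, hwY', hyw⟩ := hyw
        obtain ⟨q, -, hqe⟩ := proj_walk p hxu hyw
        obtain ⟨s, hsS, hse⟩ := hsep q.bypass huX' hwY' q.bypass_isPath
        have hse' := q.edges_bypass_subset hse
        obtain ⟨hs, hmem⟩ := hqe s hse'
        refine ⟨Sum.inr ⟨s, hs⟩, ?_, hmem⟩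
        rw [Finset.mem_image]
        exact ⟨⟨s, Finset.mem_filter.mpr ⟨hsS, hs⟩⟩, Finset.mem_attach _ _, rfl⟩
    · -- Y = {inr f}
      refine ⟨{Sum.inr f}, by simpa using one_le_of_edge h f, ?_⟩
      intro x y p hx hy _
      refine ⟨Sum.inr f, Finset.mem_singleton_self _, ?_⟩
      rw [Set.mem_singleton_iff] at hy
      rw [← hy]
      exact p.end_mem_support
  · -- X = {inr e}
    refine ⟨{Sum.inr e}, by simpa using one_le_of_edge h e, ?_⟩
    intro x y p hx hy _
    refine ⟨Sum.inr e, Finset.mem_singleton_self _, ?_⟩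
    rw [Set.mem_singleton_iff] at hx
    rw [← hx]
    exact p.start_mem_support
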